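/- Let m, n, r, d be integers with m, n ≥ 2, d ≥ 1 and 0 < r < min{m,n}, let a be an integer with 0 ≤ a ≤ rd, and define α := ⌊a/(n−r)⌋, s := a mod (n−r), β := ⌊(rd−a)/(m−r)⌋, t := (rd−a) mod (m−r). Suppose P = L R, where L ∈ ℂ[λ]^{m×r} has columns forming a minimal basis, R ∈ ℂ[λ]^{r×n} has rows forming a minimal basis, N_ℓ(L) has minimal indices β+1 (t times) and β (m−r−t times), N_r(R) has minimal indices α+1 (s times) and α (n−r−s times), and deg(L_{*i}) + deg(R_{i*}) = d for i = 1,…,r. Then Σ_{i=1}^r deg(R_{i*}) = a; that is, orb(K_a) ⊆ A^{m×n}_{d,r,a}, where A^{m×n}_{d,r,a} := { L R : L ∈ ℂ[λ]^{m×r}, R ∈ ℂ[λ]^{r×n}, deg(L_{*i}) + deg(R_{i*}) = d for i = 1,…,r, Σ_{i=1}^r deg(R_{i*}) = a }. -/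

import Mathlib

open Polynomial Matrix

noncomputable section

variable {F : Type*} [Field F]

/-- The matrix over the field of rational functions associated with a polynomial matrix. -/
def toRat {m n : ℕ} (P : Matrix (Fin m) (Fin n) F[X]) : Matrix (Fin m) (Fin n) (RatFunc F) :=
  P.map (algebraMap F[X] (RatFunc F))

/-- The normal rank of a polynomial matrix: its rank over the field of rational functions. -/
def normalRank {m n : ℕ} (P : Matrix (Fin m) (Fin n) F[X]) : ℕ := (toRat P).rank

/-- The degree of a polynomial matrix: the maximum of the degrees of its entries,
`⊥` (i.e. -∞) for the zero matrix. -/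
def matDeg {m n : ℕ} (P : Matrix (Fin m) (Fin n) F[X]) : WithBot ℕ :=
  Finset.univ.sup fun i : Fin m => Finset.univ.sup fun j : Fin n => (P i j).degree

/-- Degree of the i-th row. -/
def rowDeg {m n : ℕ} (P : Matrix (Fin m) (Fin n) F[X]) (i : Fin m) : WithBot ℕ :=
  Finset.univ.sup fun j : Fin n => (P i j).degree

/-- Degree of the j-th column. -/
def colDeg {m n : ℕ} (P : Matrix (Fin m) (Fin n) F[X]) (j : Fin n) : WithBot ℕ :=
  Finset.univ.sup fun i : Fin m => (P i j).degree

/-- Degree of the i-th row as a natural number (0 for a zero row). -/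
def rowDegNat {m n : ℕ} (P : Matrix (Fin m) (Fin n) F[X]) (i : Fin m) : ℕ :=
  Finset.univ.sup fun j : Fin n => (P i j).natDegree

/-- Degree of the j-th column as a natural number (0 for a zero column). -/
def colDegNat {m n : ℕ} (P : Matrix (Fin m) (Fin n) F[X]) (j : Fin n) : ℕ :=
  Finset.univ.sup fun i : Fin m => (P i j).natDegree

/-- Highest-row-degree coefficient matrix. -/
def hrMatrix {m n : ℕ} (P : Matrix (Fin m) (Fin n) F[X]) : Matrix (Fin m) (Fin n) F :=
  Matrix.of fun i j => (P i j).coeff (rowDegNat P i)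

/-- Highest-column-degree coefficient matrix. -/
def hcMatrix {m n : ℕ} (P : Matrix (Fin m) (Fin n) F[X]) : Matrix (Fin m) (Fin n) F :=
  Matrix.of fun i j => (P i j).coeff (colDegNat P j)

/-- A polynomial matrix is row reduced if its highest-row-degree coefficient matrix has
full row rank. -/
def RowReduced {m n : ℕ} (P : Matrix (Fin m) (Fin n) F[X]) : Prop := (hrMatrix P).rank = m

/-- A polynomial matrix is column reduced if its highest-column-degree coefficient matrix has
full column rank. -/
def ColReduced {m n : ℕ} (P : Matrix (Fin m) (Fin n) F[X]) : Prop := (hcMatrix P).rank = n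

/-- Evaluation of a polynomial matrix at a point of the algebraic closure. -/
def evalMat {m n : ℕ} (P : Matrix (Fin m) (Fin n) F[X]) (x : AlgebraicClosure F) :
    Matrix (Fin m) (Fin n) (AlgebraicClosure F) :=
  Matrix.of fun i j => aeval x (P i j)

/-- The rows of `P` form a minimal basis of the rational subspace they span (Forney's
characterization): full row rank at every point of the algebraic closure, and row reduced. -/
def IsMinimalRowBasis {m n : ℕ} (P : Matrix (Fin m) (Fin n) F[X]) : Prop :=
  (∀ x : AlgebraicClosure F, (evalMat P x).rank = m) ∧ RowReduced P

/-- The columns of `P` form a minimal basis of the rational subspace they span. -/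
def IsMinimalColBasis {m n : ℕ} (P : Matrix (Fin m) (Fin n) F[X]) : Prop :=
  (∀ x : AlgebraicClosure F, (evalMat P x).rank = n) ∧ ColReduced P

/-- The column space Col(P) over the field of rational functions. -/
def colSpace {m n : ℕ} (P : Matrix (Fin m) (Fin n) F[X]) :
    Submodule (RatFunc F) (Fin m → RatFunc F) :=
  LinearMap.range (toRat P).mulVecLin

/-- The row space Row(P) over the field of rational functions. -/
def rowSpace {m n : ℕ} (P : Matrix (Fin m) (Fin n) F[X]) :
    Submodule (RatFunc F) (Fin n → RatFunc F) :=
  LinearMap.range (toRat P)ᵀ.mulVecLin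

/-- The right nullspace N_r(P). -/
def rightNull {m n : ℕ} (P : Matrix (Fin m) (Fin n) F[X]) :
    Submodule (RatFunc F) (Fin n → RatFunc F) :=
  LinearMap.ker (toRat P).mulVecLin

/-- The left nullspace N_ℓ(P). -/
def leftNull {m n : ℕ} (P : Matrix (Fin m) (Fin n) F[X]) :
    Submodule (RatFunc F) (Fin m → RatFunc F) :=
  LinearMap.ker (toRat P)ᵀ.mulVecLin
/-- Minimal row basis over ℂ (Forney's characterization, with evaluation points in ℂ,
which is algebraically closed). -/
def IsMinimalRowBasisC {p n : ℕ} (M : Matrix (Fin p) (Fin n) ℂ[X]) : Prop :=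
  (∀ x : ℂ, (M.map (fun q => q.eval x)).rank = p) ∧ RowReduced M

/-- Minimal column basis over ℂ. -/
def IsMinimalColBasisC {m p : ℕ} (M : Matrix (Fin m) (Fin p) ℂ[X]) : Prop :=
  (∀ x : ℂ, (M.map (fun q => q.eval x)).rank = p) ∧ ColReduced M

/-- A rational subspace V has the multiset ms as its minimal indices: it admits a minimal
basis (arranged as the rows of a polynomial matrix) whose multiset of row degrees is ms. -/
def HasMinIndices {n : ℕ} (V : Submodule (RatFunc ℂ) (Fin n → RatFunc ℂ))
    (ms : Multiset ℕ) : Prop :=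
  ∃ (p : ℕ) (M : Matrix (Fin p) (Fin n) ℂ[X]), IsMinimalRowBasisC M ∧ rowSpace M = V ∧
    (Finset.univ.val.map fun i : Fin p => rowDegNat M i) = ms

namespace OrbAux

variable {K : Type*} [Field K]

/-- Equality up to sign. -/
def PM (x y : K) : Prop := x = y ∨ x = -y

lemma PM.refl (x : K) : PM x x := Or.inl (Eq.refl x)

lemma PM.symm {x y : K} (h : PM x y) : PM y x := by
  rcases h with h | h <;> subst h
  · exact Or.inl (Eq.refl _)
  · exact Or.inr (by ring)

lemma PM.trans {x y z : K} (h : PM x y) (h' : PM y z) : PM x z := by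
  rcases h with h | h <;> rcases h' with h' | h' <;> subst h <;> subst h'
  · exact Or.inl (Eq.refl _)
  · exact Or.inr (Eq.refl _)
  · exact Or.inr (Eq.refl _)
  · exact Or.inl (by ring)

lemma PM.mul_left (a : K) {x y : K} (h : PM x y) : PM (a * x) (a * y) := by
  rcases h with h | h <;> subst h
  · exact Or.inl (Eq.refl _)
  · exact Or.inr (by ring)

lemma PM.neg_right {x y : K} (h : PM x y) : PM x (-y) := by
  rcases h with h | h <;> subst h
  · exact Or.inr (by ring)
  · exact Or.inl (by ring)

lemma PM.of_sign (u : ℤˣ) (x : K) : PM ((u : ℤ) * x) x := by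
  rcases Int.units_eq_one_or u with h | h <;> simp [PM, h]

lemma PM.neg_one_pow (n : ℕ) (x : K) : PM ((-1 : K) ^ n * x) x := by
  rcases Nat.even_or_odd n with h | h
  · simp [PM, h.neg_one_pow]
  · simp [PM, h.neg_one_pow]

/-- column permutation changes det by a sign only -/
lemma pm_det_col_perm {q : ℕ} (N : Matrix (Fin q) (Fin q) K) (π : Equiv.Perm (Fin q)) :
    PM ((N.submatrix id ⇑π).det) N.det := by
  rw [Matrix.det_permute']
  exact PM.of_sign _ _

/-- reindexing rows and columns by equivs changes det by a sign only -/
lemma pm_det_reindex {β β' : Type*} [DecidableEq β] [Fintype β] [DecidableEq β'] [Fintype β']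
    (N : Matrix β' β' K) (f g : β ≃ β') :
    PM ((N.submatrix ⇑f ⇑g).det) N.det := by
  have h1 : N.submatrix ⇑f ⇑g = (N.submatrix ⇑f ⇑f).submatrix id ⇑(g.trans f.symm) := by
    ext i j; simp
  rw [h1]
  have := Matrix.det_permute' (g.trans f.symm) (N.submatrix ⇑f ⇑f)
  rw [this, Matrix.det_submatrix_equiv_self]
  exact PM.of_sign _ _

/-- two injections with the same range differ by a permutation; dets of submatrices PM-equal -/
lemma pm_det_reenum {q m t : ℕ} (D : Matrix (Fin q) (Fin m) K)
    (rE rE' : Fin t → Fin q) (cE cE' : Fin t → Fin m)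
    (hrE : Function.Injective rE) (hrE' : Function.Injective rE')
    (hcE : Function.Injective cE) (hcE' : Function.Injective cE')
    (hr : Set.range rE = Set.range rE') (hc : Set.range cE = Set.range cE') :
    PM ((D.submatrix rE' cE').det) ((D.submatrix rE cE).det) := by
  have hr' : ∀ b, ∃ b', rE b' = rE' b := by
    intro b; have : rE' b ∈ Set.range rE := hr ▸ Set.mem_range_self b
    exact this
  have hc' : ∀ b, ∃ b', cE b' = cE' b := by
    intro b; have : cE' b ∈ Set.range cE := hc ▸ Set.mem_range_self b
    exact this
  choose fr hfr using hr'
  choose fc hfc using hc'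
  have hfr_inj : Function.Injective fr := fun a b hab => by
    apply hrE'; rw [← hfr, ← hfr, hab]
  have hfc_inj : Function.Injective fc := fun a b hab => by
    apply hcE'; rw [← hfc, ← hfc, hab]
  let er : Fin t ≃ Fin t := Equiv.ofBijective fr
    ((Fintype.bijective_iff_injective_and_card fr).2 ⟨hfr_inj, rfl⟩)
  let ec : Fin t ≃ Fin t := Equiv.ofBijective fc
    ((Fintype.bijective_iff_injective_and_card fc).2 ⟨hfc_inj, rfl⟩)
  have key : D.submatrix rE' cE' = (D.submatrix rE cE).submatrix ⇑er ⇑ec := by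
    ext i j
    simp only [Matrix.submatrix_apply]
    rw [show er i = fr i from rfl, show ec j = fc j from rfl, hfr, hfc]
  rw [key]
  exact pm_det_reindex _ er ec


/-- L1: a full-row-rank matrix has an invertible maximal square submatrix -/
lemma exists_minor_ne_zero {r n : ℕ} (A : Matrix (Fin r) (Fin n) K) (h : A.rank = r) :
    ∃ g : Fin r → Fin n, Function.Injective g ∧ (A.submatrix id g).det ≠ 0 := by
  classical
  -- columns span ⊤
  have hspan : Submodule.span K (Set.range Aᵀ) = ⊤ := by
    apply Submodule.eq_top_of_finrank_eq
    rw [show Set.range Aᵀ = Set.range A.col from rfl, ← Matrix.rank_eq_finrank_span_cols, h,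
      Module.finrank_fin_fun]
  obtain ⟨t, hts, hsp, hli⟩ := exists_linearIndependent K (Set.range Aᵀ)
  rw [hspan] at hsp
  -- t is a basis
  have hb : ⊤ ≤ Submodule.span K (Set.range (Subtype.val : t → Fin r → K)) := by
    rw [Subtype.range_coe]; rw [hsp]
  let b : Module.Basis t K (Fin r → K) := Module.Basis.mk hli hb
  have : Fintype t := FiniteDimensional.fintypeBasisIndex b
  have hcard : Fintype.card t = r := by
    have := Module.finrank_eq_card_basis b
    rw [Module.finrank_fin_fun] at this
    omega
  let e : Fin r ≃ t := (Fintype.equivFinOfCardEq hcard).symm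
  have hmem : ∀ i : Fin r, ((e i : Fin r → K) ∈ Set.range Aᵀ) := fun i => hts (e i).2
  choose g hg using fun i => hmem i
  refine ⟨g, ?_, ?_⟩
  · intro i j hij
    apply e.injective
    apply Subtype.ext
    rw [← hg i, ← hg j, hij]
  · have hcols : LinearIndependent K (fun j => (A.submatrix id g)ᵀ j) := by
      have : (fun j => (A.submatrix id g)ᵀ j) = fun j => ((e j : Fin r → K)) := by
        funext j; rw [← hg j]; rfl
      rw [this]
      exact hli.comp _ e.injective
    have := Matrix.linearIndependent_cols_iff_isUnit.mp hcols
    rw [Matrix.isUnit_iff_isUnit_det] at this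
    exact this.ne_zero

/-- Rows of a wide matrix with an invertible maximal submatrix are linearly independent -/
lemma rows_linearIndependent_of_minor {r n : ℕ} (A : Matrix (Fin r) (Fin n) K)
    (g : Fin r → Fin n) (hdet : (A.submatrix id g).det ≠ 0) :
    LinearIndependent K (fun i => A i) := by
  classical
  have hU : IsUnit (A.submatrix id g) :=
    (Matrix.isUnit_iff_isUnit_det _).2 (isUnit_iff_ne_zero.2 hdet)
  have hli : LinearIndependent K (fun i => (A.submatrix id g) i) :=
    Matrix.linearIndependent_rows_iff_isUnit.2 hU
  apply LinearIndependent.of_comp (LinearMap.funLeft K K g)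
  convert hli using 1
  rfl

/-- L2: coefficient of a product at the sum of degree bounds -/
lemma coeff_prod_of_natDegree_le' {ι : Type*} (s : Finset ι) (f : ι → K[X]) (d : ι → ℕ)
    (h : ∀ i ∈ s, (f i).natDegree ≤ d i) :
    (∏ i ∈ s, f i).coeff (∑ i ∈ s, d i) = ∏ i ∈ s, (f i).coeff (d i) := by
  classical
  induction s using Finset.cons_induction with
  | empty => simp
  | cons a s ha ih =>
    rw [Finset.prod_cons, Finset.sum_cons, Finset.prod_cons,
      Polynomial.coeff_mul_add_eq_of_natDegree_le (h a (Finset.mem_cons_self a s))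
        (le_trans (Polynomial.natDegree_prod_le s f)
          (Finset.sum_le_sum (fun i hi => h i (Finset.mem_cons_of_mem hi)))),
      ih (fun i hi => h i (Finset.mem_cons_of_mem hi))]


lemma degree_minor_le {r n : ℕ} (A : Matrix (Fin r) (Fin n) F[X]) (g : Fin r → Fin n) :
    ((A.submatrix id g).det).degree ≤ ((∑ i, rowDegNat A i : ℕ) : WithBot ℕ) := by
  rw [Matrix.det_apply]
  refine le_trans (Polynomial.degree_sum_le _ _) ?_
  refine Finset.sup_le fun σ _ => ?_
  have h1 : ∀ i : Fin r, ((A.submatrix id g) (σ i) i).degree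
      ≤ ((rowDegNat A (σ i) : ℕ) : WithBot ℕ) := by
    intro i
    refine le_trans (Polynomial.degree_le_natDegree) ?_
    exact (Nat.cast_le (α := WithBot ℕ)).2
      (Finset.le_sup (f := fun j => (A (σ i) j).natDegree) (Finset.mem_univ (g i)))
  have hb : (∏ i, (A.submatrix id g) (σ i) i).degree
      ≤ ((∑ i, rowDegNat A i : ℕ) : WithBot ℕ) := by
    refine le_trans (Polynomial.degree_prod_le _ _) ?_
    refine le_trans (Finset.sum_le_sum fun i _ => h1 i) ?_
    rw [← Equiv.sum_comp σ (rowDegNat A)]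
    exact le_of_eq (Nat.cast_sum _ _).symm
  rcases Int.units_eq_one_or (Equiv.Perm.sign σ) with hs | hs <;> rw [hs]
  · rw [one_smul]; exact hb
  · have : (-1 : ℤˣ) • (∏ i, (A.submatrix id g) (σ i) i)
        = -(∏ i, (A.submatrix id g) (σ i) i) := by
      rw [Units.smul_def]
      push_cast
      rw [neg_smul, one_smul]
    rw [this, Polynomial.degree_neg]
    exact hb

lemma coeff_minor {r n : ℕ} (A : Matrix (Fin r) (Fin n) F[X]) (g : Fin r → Fin n) :
    ((A.submatrix id g).det).coeff (∑ i, rowDegNat A i)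
      = ((hrMatrix A).submatrix id g).det := by
  rw [Matrix.det_apply, Matrix.det_apply, Polynomial.finset_sum_coeff]
  refine Finset.sum_congr rfl fun σ _ => ?_
  rw [Polynomial.coeff_smul]
  congr 1
  rw [← Equiv.sum_comp σ (rowDegNat A)]
  have hco := coeff_prod_of_natDegree_le' Finset.univ
    (fun i => A.submatrix id g (σ i) i) (fun i => rowDegNat A (σ i))
    (fun i _ => Finset.le_sup (f := fun j => (A (σ i) j).natDegree) (Finset.mem_univ (g i)))
  rw [hco]
  rfl

lemma rowDeg_eq_rowDegNat {r n : ℕ} (A : Matrix (Fin r) (Fin n) F[X]) (i : Fin r)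
    (h : ∃ j, A i j ≠ 0) : rowDeg A i = ((rowDegNat A i : ℕ) : WithBot ℕ) := by
  apply le_antisymm
  · refine Finset.sup_le fun j _ => ?_
    refine le_trans (Polynomial.degree_le_natDegree) ?_
    exact (Nat.cast_le (α := WithBot ℕ)).2
      (Finset.le_sup (f := fun j' => (A i j').natDegree) (Finset.mem_univ j))
  · obtain ⟨j₁, hj₁⟩ := h
    have hne : (Finset.univ : Finset (Fin n)).Nonempty := ⟨j₁, Finset.mem_univ j₁⟩
    obtain ⟨j₀, _, hj₀⟩ := Finset.exists_mem_eq_sup Finset.univ hne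
      (fun j => (A i j).natDegree)
    by_cases hz : A i j₀ = 0
    · have : rowDegNat A i = 0 := by
        rw [rowDegNat, hj₀, hz, Polynomial.natDegree_zero]
      rw [this]
      refine le_trans ?_ (Finset.le_sup (Finset.mem_univ j₁))
      exact_mod_cast (Polynomial.zero_le_degree_iff).2 hj₁
    · refine le_trans ?_ (Finset.le_sup (Finset.mem_univ j₀))
      rw [rowDegNat, hj₀, ← Polynomial.degree_eq_natDegree hz]

lemma eval_minor {r n : ℕ} (A : Matrix (Fin r) (Fin n) F[X]) (x : F) (g : Fin r → Fin n) :
    (((A.map (fun q => q.eval x)).submatrix id g)).det = ((A.submatrix id g).det).eval x := by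
  have h1 : (A.map (fun q => q.eval x)).submatrix id g
      = (A.submatrix id g).map ⇑(Polynomial.evalRingHom x) := by
    ext i j; simp
  rw [h1, ← RingHom.mapMatrix_apply, ← RingHom.map_det]
  rfl

lemma algmap_minor {r n : ℕ} (A : Matrix (Fin r) (Fin n) F[X]) (g : Fin r → Fin n) :
    ((A.map (algebraMap F[X] (RatFunc F))).submatrix id g).det
      = algebraMap F[X] (RatFunc F) ((A.submatrix id g).det) := by
  have h1 : (A.map (algebraMap F[X] (RatFunc F))).submatrix id g
      = (A.submatrix id g).map ⇑(algebraMap F[X] (RatFunc F)) := by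
    ext i j; simp
  rw [h1, ← RingHom.mapMatrix_apply, ← RingHom.map_det]


lemma det_unit_aug {q m t : ℕ} (D : Matrix (Fin q) (Fin m) K)
    (φ : Fin q → Fin q ⊕ Fin m) (hφ : Function.Injective φ)
    (rE : Fin t → Fin q) (cE : Fin t → Fin m)
    (hrE : Function.Injective rE) (hcE : Function.Injective cE)
    (hrange_r : ∀ l, l ∈ Set.range rE ↔ Sum.inl l ∉ Set.range φ)
    (hrange_c : ∀ k, k ∈ Set.range cE ↔ Sum.inr k ∈ Set.range φ) :
    PM ((Matrix.of fun i j => Sum.elim (fun l => if i = l then (1:K) else 0)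
          (fun k => D i k) (φ j)).det)
       ((D.submatrix rE cE).det) := by
  classical
  set X : Matrix (Fin q) (Fin q) K :=
    Matrix.of fun i j => Sum.elim (fun l => if i = l then (1:K) else 0)
      (fun k => D i k) (φ j) with hX
  -- column index partition
  set colL : Finset (Fin q) := Finset.univ.filter (fun j => (φ j).isLeft) with hcolL
  set colR : Finset (Fin q) := Finset.univ.filter (fun j => (φ j).isRight) with hcolR
  set s := colL.card with hs
  set t' := colR.card with ht'
  have hst : s + t' = q := by
    rw [hs, ht', hcolL, hcolR]
    have heq : Finset.univ.filter (fun j => (φ j).isRight)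
        = Finset.univ.filter (fun j => ¬ ((φ j).isLeft = true)) := by
      apply Finset.filter_congr
      intro j _
      cases φ j <;> simp
    rw [heq]
    simpa using Finset.card_filter_add_card_filter_not
      (s := (Finset.univ : Finset (Fin q))) (p := fun j => (φ j).isLeft = true)
  set cLE : Fin s → Fin q := ⇑(colL.orderEmbOfFin rfl) with hcLE
  set cRE : Fin t' → Fin q := ⇑(colR.orderEmbOfFin rfl) with hcRE
  have hcLE_inj : Function.Injective cLE := (colL.orderEmbOfFin rfl).injective
  have hcRE_inj : Function.Injective cRE := (colR.orderEmbOfFin rfl).injective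
  have hcLE_mem : ∀ a, cLE a ∈ colL := fun a => Finset.orderEmbOfFin_mem _ _ _
  have hcRE_mem : ∀ b, cRE b ∈ colR := fun b => Finset.orderEmbOfFin_mem _ _ _
  -- left/right components
  have hL : ∀ a : Fin s, ∃ l, φ (cLE a) = Sum.inl l := by
    intro a
    have := hcLE_mem a
    rw [hcolL, Finset.mem_filter] at this
    rcases Sum.isLeft_iff.1 this.2 with ⟨l, hl⟩
    exact ⟨l, hl⟩
  have hRt : ∀ b : Fin t', ∃ k, φ (cRE b) = Sum.inr k := by
    intro b
    have := hcRE_mem b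
    rw [hcolR, Finset.mem_filter] at this
    rcases Sum.isRight_iff.1 this.2 with ⟨k, hk⟩
    exact ⟨k, hk⟩
  choose rL hrL using hL
  choose cK hcK using hRt
  have hrL_inj : Function.Injective rL := by
    intro a a' haa
    apply hcLE_inj
    apply hφ
    rw [hrL, hrL, haa]
  have hcK_inj : Function.Injective cK := by
    intro b b' hbb
    apply hcRE_inj
    apply hφ
    rw [hcK, hcK, hbb]
  -- range of cK = range of cE
  have hrangeK : Set.range cK = Set.range cE := by
    ext k
    constructor
    · rintro ⟨b, rfl⟩
      exact (hrange_c (cK b)).2 ⟨cRE b, hcK b⟩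
    · rintro ⟨b, rfl⟩
      rcases (hrange_c (cE b)).1 ⟨b, rfl⟩ with ⟨j, hj⟩
      have hjR : j ∈ colR := by
        rw [hcolR, Finset.mem_filter]
        exact ⟨Finset.mem_univ j, by rw [hj]; rfl⟩
      have : j ∈ Set.range cRE := by
        rw [hcRE]
        rw [Finset.range_orderEmbOfFin]
        exact hjR
      rcases this with ⟨b', hb'⟩
      refine ⟨b', ?_⟩
      have := hcK b'
      rw [hb', hj] at this
      exact Sum.inr.inj this.symm
  -- t' = t
  have htt : t' = t := by
    have h1 : Finset.univ.image cK = Finset.univ.image cE := by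
      ext k
      simp only [Finset.mem_image, Finset.mem_univ, true_and]
      constructor
      · rintro ⟨b, rfl⟩
        have : cK b ∈ Set.range cE := hrangeK ▸ Set.mem_range_self b
        exact this
      · rintro ⟨b, rfl⟩
        have : cE b ∈ Set.range cK := hrangeK.symm ▸ Set.mem_range_self b
        exact this
    have h2 := Finset.card_image_of_injective Finset.univ hcK_inj
    have h3 := Finset.card_image_of_injective Finset.univ hcE
    rw [h1, h3] at h2
    simpa using h2.symm
  subst htt
  -- equivs
  have hcard_sum : Fintype.card (Fin s ⊕ Fin t') = Fintype.card (Fin q) := by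
    simp [hst]
  have hσ_inj : Function.Injective (Sum.elim cLE cRE) := by
    rintro (a | b) (a' | b') hab <;>
      simp only [Sum.elim_inl, Sum.elim_inr] at hab
    · rw [hcLE_inj hab]
    · exfalso
      have h1 := hcLE_mem a
      have h2 := hcRE_mem b'
      rw [hab] at h1
      rw [hcolL, Finset.mem_filter] at h1
      rw [hcolR, Finset.mem_filter] at h2
      rcases Sum.isLeft_iff.1 h1.2 with ⟨l, hl⟩
      rcases Sum.isRight_iff.1 h2.2 with ⟨k, hk⟩
      rw [hl] at hk; exact Sum.inl_ne_inr hk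
    · exfalso
      have h1 := hcLE_mem a'
      have h2 := hcRE_mem b
      rw [hab] at h2
      rw [hcolL, Finset.mem_filter] at h1
      rw [hcolR, Finset.mem_filter] at h2
      rcases Sum.isLeft_iff.1 h1.2 with ⟨l, hl⟩
      rcases Sum.isRight_iff.1 h2.2 with ⟨k, hk⟩
      rw [hl] at hk; exact Sum.inl_ne_inr hk
    · rw [hcRE_inj hab]
  let σ : Fin s ⊕ Fin t' ≃ Fin q := Equiv.ofBijective (Sum.elim cLE cRE)
    ((Fintype.bijective_iff_injective_and_card _).2 ⟨hσ_inj, hcard_sum⟩)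
  have hτ_inj : Function.Injective (Sum.elim rL rE) := by
    rintro (a | b) (a' | b') hab <;>
      simp only [Sum.elim_inl, Sum.elim_inr] at hab
    · rw [hrL_inj hab]
    · exfalso
      have h2 : Sum.inl (rE b') ∉ Set.range φ := (hrange_r (rE b')).1 ⟨b', rfl⟩
      apply h2
      refine ⟨cLE a, ?_⟩
      rw [hrL a, hab]
    · exfalso
      have h2 : Sum.inl (rE b) ∉ Set.range φ := (hrange_r (rE b)).1 ⟨b, rfl⟩
      apply h2
      refine ⟨cLE a', ?_⟩
      rw [hrL a', hab]
    · rw [hrE hab]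
  let τ : Fin s ⊕ Fin t' ≃ Fin q := Equiv.ofBijective (Sum.elim rL rE)
    ((Fintype.bijective_iff_injective_and_card _).2 ⟨hτ_inj, hcard_sum⟩)
  -- block structure
  have hblock : X.submatrix ⇑τ ⇑σ
      = Matrix.fromBlocks 1 (Matrix.of fun a b => D (rL a) (cK b)) 0
          (D.submatrix rE cK) := by
    ext i j
    rcases i with a | b <;> rcases j with a' | b'
    · show X (rL a) (cLE a') = _
      rw [hX]
      show Sum.elim _ _ (φ (cLE a')) = _
      rw [hrL a']
      show (if rL a = rL a' then (1:K) else 0) = (1 : Matrix (Fin s) (Fin s) K) a a'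
      rw [Matrix.one_apply]
      exact if_congr ⟨fun h => hrL_inj h, fun h => by rw [h]⟩ rfl rfl
    · show X (rL a) (cRE b') = _
      rw [hX]
      show Sum.elim _ _ (φ (cRE b')) = _
      rw [hcK b']
      rfl
    · show X (rE b) (cLE a') = _
      rw [hX]
      show Sum.elim _ _ (φ (cLE a')) = _
      rw [hrL a']
      show (if rE b = rL a' then (1:K) else 0) = (0 : Matrix (Fin t') (Fin s) K) b a'
      rw [if_neg, Matrix.zero_apply]
      intro hco
      have h2 : Sum.inl (rE b) ∉ Set.range φ := (hrange_r (rE b)).1 ⟨b, rfl⟩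
      exact h2 ⟨cLE a', by rw [hrL a', hco]⟩
    · show X (rE b) (cRE b') = _
      rw [hX]
      show Sum.elim _ _ (φ (cRE b')) = _
      rw [hcK b']
      rfl
  have hPM1 : PM ((X.submatrix ⇑τ ⇑σ).det) X.det := pm_det_reindex X τ σ
  have hdet1 : (X.submatrix ⇑τ ⇑σ).det = (D.submatrix rE cK).det := by
    rw [hblock, Matrix.det_fromBlocks_zero₂₁, Matrix.det_one, one_mul]
  have hPM2 : PM ((D.submatrix rE cK).det) ((D.submatrix rE cE).det) :=
    pm_det_reenum D rE rE cE cK hrE hrE hcE hcK_inj rfl hrangeK.symm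
  have : PM X.det ((D.submatrix rE cK).det) := by
    rcases hPM1 with h | h
    · rw [← hdet1, h]; exact Or.inl rfl
    · rw [← hdet1]
      rcases (show X.det = -(X.submatrix ⇑τ ⇑σ).det from by rw [h]; ring) with h2
      rw [h2]; exact Or.inr (by ring)
  exact PM.trans this hPM2


lemma duality {r p n : ℕ} (hrpn : r + p = n)
    (R : Matrix (Fin r) (Fin n) K) (M : Matrix (Fin p) (Fin n) K)
    (hRM : R * Mᵀ = 0)
    (hM : LinearIndependent K (fun i => M i))
    (g₀ : Fin r → Fin n) (hg₀ : Function.Injective g₀)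
    (hA₀ : (R.submatrix id g₀).det ≠ 0) :
    ∃ f : K, f ≠ 0 ∧ ∀ (g : Fin r → Fin n) (h : Fin p → Fin n),
      (∀ j : Fin n, (∃ i, g i = j) ∨ (∃ i, h i = j)) →
      ∃ c : K, PM c 1 ∧ (M.submatrix id h).det = c * f * (R.submatrix id g).det := by
  classical
  -- complete g₀ to a bijection
  have hcompl_card : ((Finset.univ.image g₀)ᶜ : Finset (Fin n)).card = p := by
    rw [Finset.card_compl, Finset.card_image_of_injective _ hg₀]
    simp [← hrpn]
  let h₀ : Fin p → Fin n := ⇑((Finset.univ.image g₀)ᶜ.orderEmbOfFin hcompl_card)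
  have he_inj : Function.Injective (Sum.elim g₀ h₀) := by
    rintro (a | b) (a' | b') hab <;> simp only [Sum.elim_inl, Sum.elim_inr] at hab
    · rw [hg₀ hab]
    · exfalso
      have h1 : g₀ a ∈ Finset.univ.image g₀ := Finset.mem_image_of_mem _ (Finset.mem_univ a)
      have h2 : h₀ b' ∈ (Finset.univ.image g₀)ᶜ := Finset.orderEmbOfFin_mem _ _ _
      rw [hab] at h1
      exact (Finset.mem_compl.1 h2) h1
    · exfalso
      have h1 : g₀ a' ∈ Finset.univ.image g₀ := Finset.mem_image_of_mem _ (Finset.mem_univ a')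
      have h2 : h₀ b ∈ (Finset.univ.image g₀)ᶜ := Finset.orderEmbOfFin_mem _ _ _
      rw [← hab] at h1
      exact (Finset.mem_compl.1 h2) h1
    · exact congrArg Sum.inr (((Finset.univ.image g₀)ᶜ.orderEmbOfFin hcompl_card).injective hab)
  let e : Fin r ⊕ Fin p ≃ Fin n := Equiv.ofBijective (Sum.elim g₀ h₀)
    ((Fintype.bijective_iff_injective_and_card _).2 ⟨he_inj, by simp [hrpn]⟩)
  set A : Matrix (Fin r) (Fin r) K := R.submatrix id (fun l => e (Sum.inl l)) with hA
  set B : Matrix (Fin r) (Fin p) K := R.submatrix id (fun k => e (Sum.inr k)) with hB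
  have hAdet : A.det ≠ 0 := by
    have : A = R.submatrix id g₀ := rfl
    rw [this]; exact hA₀
  have hAunit : IsUnit A.det := isUnit_iff_ne_zero.2 hAdet
  set C : Matrix (Fin r) (Fin p) K := A⁻¹ * B with hC
  set M₁ : Matrix (Fin p) (Fin r) K := M.submatrix id (fun l => e (Sum.inl l)) with hM₁d
  set M₂ : Matrix (Fin p) (Fin p) K := M.submatrix id (fun k => e (Sum.inr k)) with hM₂d
  -- orthogonality in the new coordinates
  have horth : A * M₁ᵀ + B * M₂ᵀ = 0 := by
    ext i k
    have hsum : ∑ x : Fin r ⊕ Fin p, R i (e x) * M k (e x) = ∑ j : Fin n, R i j * M k j :=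
      Equiv.sum_comp e (fun j => R i j * M k j)
    have : (A * M₁ᵀ + B * M₂ᵀ) i k = ∑ x : Fin r ⊕ Fin p, R i (e x) * M k (e x) := by
      rw [Fintype.sum_sum_type]
      simp [Matrix.add_apply, Matrix.mul_apply, hA, hB, hM₁d, hM₂d]
    rw [this, hsum]
    have h4 : (R * Mᵀ) i k = (0 : Matrix (Fin r) (Fin p) K) i k := by rw [hRM]
    rw [Matrix.zero_apply] at h4
    rw [Matrix.mul_apply] at h4
    rw [Matrix.zero_apply]
    simpa [Matrix.transpose_apply] using h4
  have hM1 : M₁ = -(M₂ * Cᵀ) := by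
    have h1 : A * M₁ᵀ = -(B * M₂ᵀ) := by
      have := horth
      rw [add_eq_zero_iff_eq_neg] at this
      exact this
    have h2 : M₁ᵀ = -(C * M₂ᵀ) := by
      have h3 : A⁻¹ * (A * M₁ᵀ) = A⁻¹ * (-(B * M₂ᵀ)) := by rw [h1]
      rw [Matrix.nonsing_inv_mul_cancel_left _ _ hAunit] at h3
      rw [h3, hC, Matrix.mul_neg, Matrix.mul_assoc]
    calc M₁ = (M₁ᵀ)ᵀ := by rw [Matrix.transpose_transpose]
    _ = (-(C * M₂ᵀ))ᵀ := by rw [h2]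
    _ = -(M₂ * Cᵀ) := by rw [Matrix.transpose_neg, Matrix.transpose_mul,
        Matrix.transpose_transpose]
  -- M₂ is invertible
  have hM₂unit : IsUnit M₂ := by
    rw [← Matrix.vecMul_injective_iff_isUnit]
    intro v w hvw
    have hvw' : v ᵥ* M₂ = w ᵥ* M₂ := hvw
    have hsub : (v - w) ᵥ* M₂ = 0 := by
      rw [Matrix.sub_vecMul, hvw', sub_self]
    set x := v - w with hx
    have hxM1 : x ᵥ* M₁ = 0 := by
      rw [hM1, Matrix.vecMul_neg, ← Matrix.vecMul_vecMul, hsub, Matrix.zero_vecMul, neg_zero]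
    have hxM : x ᵥ* M = 0 := by
      funext j
      obtain ⟨y, rfl⟩ := e.surjective j
      rcases y with l | k
      · have : (x ᵥ* M) (e (Sum.inl l)) = (x ᵥ* M₁) l := by
          simp [Matrix.vecMul, dotProduct, hM₁d]
        rw [this, hxM1]; rfl
      · have : (x ᵥ* M) (e (Sum.inr k)) = (x ᵥ* M₂) k := by
          simp [Matrix.vecMul, dotProduct, hM₂d]
        rw [this, hsub]; rfl
    have hx0 : x = 0 := by
      have hli := Fintype.linearIndependent_iff.1 hM
      have : ∀ i, x i = 0 := by
        apply hli
        funext j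
        have : (∑ i, x i • M i) j = (x ᵥ* M) j := by
          simp [Matrix.vecMul, dotProduct, Finset.sum_apply]
        rw [this, hxM]
      funext i; exact this i
    rw [hx] at hx0
    exact sub_eq_zero.1 hx0
  have hM₂det : M₂.det ≠ 0 := by
    intro h0
    have := (Matrix.isUnit_iff_isUnit_det M₂).1 hM₂unit
    rw [h0] at this
    exact this.ne_zero rfl
  refine ⟨M₂.det * (A.det)⁻¹, by
    apply mul_ne_zero hM₂det (inv_ne_zero hAdet), ?_⟩
  intro g h hcov
  -- the joint bijection
  have hu_surj : Function.Surjective (Sum.elim g h) := by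
    intro j
    rcases hcov j with ⟨i, hi⟩ | ⟨i, hi⟩
    · exact ⟨Sum.inl i, hi⟩
    · exact ⟨Sum.inr i, hi⟩
  let eu : Fin r ⊕ Fin p ≃ Fin n := Equiv.ofBijective (Sum.elim g h)
    ((Fintype.bijective_iff_surjective_and_card _).2 ⟨hu_surj, by simp [hrpn]⟩)
  let w : Fin r ⊕ Fin p ≃ Fin r ⊕ Fin p := eu.trans e.symm
  let φ : Fin r → Fin r ⊕ Fin p := fun l => w (Sum.inl l)
  let ψ : Fin p → Fin r ⊕ Fin p := fun k => w (Sum.inr k)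
  have hφ_inj : Function.Injective φ := fun a b hab => Sum.inl.inj (w.injective hab)
  have heφ : ∀ l, e (φ l) = g l := fun l => e.apply_symm_apply _
  have heψ : ∀ k, e (ψ k) = h k := fun k => e.apply_symm_apply _
  -- partition of ranges
  have hpart : ∀ x : Fin r ⊕ Fin p, x ∈ Set.range φ ↔ x ∉ Set.range ψ := by
    intro x
    constructor
    · rintro ⟨l, rfl⟩ ⟨k, hk⟩
      have := w.injective hk
      exact Sum.inr_ne_inl this
    · intro hx
      obtain ⟨y, rfl⟩ := w.surjective x
      rcases y with l | k
      · exact ⟨l, rfl⟩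
      · exact absurd ⟨k, rfl⟩ hx
  -- the two template matrices
  set X₁ : Matrix (Fin r) (Fin r) K :=
    Matrix.of (fun i j => Sum.elim (fun l => if i = l then (1:K) else 0)
      (fun k => C i k) (φ j)) with hX₁
  set ψ' : Fin p → Fin p ⊕ Fin r := fun j => Sum.swap (ψ j) with hψ'
  have hψ'_inj : Function.Injective ψ' := by
    intro a b hab
    have h9 := congrArg Sum.swap hab
    rw [Sum.swap_swap, Sum.swap_swap] at h9
    exact Sum.inr.inj (w.injective h9)
  have hψ'j : ∀ j, ψ' j = (ψ j).swap := fun j => rfl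
  set X₂ : Matrix (Fin p) (Fin p) K :=
    Matrix.of (fun i j => Sum.elim (fun k => if i = k then (1:K) else 0)
      (fun l => (-Cᵀ) i l) (ψ' j)) with hX₂
  -- factorizations
  have key1 : R.submatrix id g = A * X₁ := by
    ext i j
    rcases hφj : φ j with l' | k
    · have hLHS : R.submatrix id g i j = A i l' := by
        rw [Matrix.submatrix_apply, id_eq, ← heφ j, hφj]; rfl
      have hent : ∀ l, X₁ l j = if l = l' then (1:K) else 0 := by
        intro l
        rw [hX₁]
        show Sum.elim _ _ (φ j) = _
        rw [hφj]
        rfl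
      rw [hLHS, Matrix.mul_apply]
      symm
      calc ∑ l, A i l * X₁ l j
          = ∑ l, A i l * (if l = l' then (1:K) else 0) :=
            Finset.sum_congr rfl fun l _ => by rw [hent l]
        _ = A i l' := by simp
    · have hLHS : R.submatrix id g i j = B i k := by
        rw [Matrix.submatrix_apply, id_eq, ← heφ j, hφj]; rfl
      have hAC : A * C = B := by
        rw [hC, Matrix.mul_nonsing_inv_cancel_left _ _ hAunit]
      have hent : ∀ l, X₁ l j = C l k := by
        intro l
        rw [hX₁]
        show Sum.elim _ _ (φ j) = _
        rw [hφj]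
        rfl
      rw [hLHS, Matrix.mul_apply]
      symm
      calc ∑ l, A i l * X₁ l j = ∑ l, A i l * C l k :=
            Finset.sum_congr rfl fun l _ => by rw [hent l]
        _ = (A * C) i k := by rw [Matrix.mul_apply]
        _ = B i k := by rw [hAC]
  have key2 : M.submatrix id h = M₂ * X₂ := by
    ext i j
    rcases hψj : ψ j with l | k'
    · have hLHS : M.submatrix id h i j = M₁ i l := by
        rw [Matrix.submatrix_apply, id_eq, ← heψ j, hψj]; rfl
      have hent : ∀ k, X₂ k j = -C l k := by
        intro k
        rw [hX₂]
        show Sum.elim _ _ (ψ' j) = _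
        rw [hψ'j j, hψj]
        rfl
      rw [hLHS, Matrix.mul_apply]
      calc M₁ i l = (-(M₂ * Cᵀ)) i l := by rw [hM1]
        _ = ∑ k, M₂ i k * (-C l k) := by
            rw [Matrix.neg_apply, Matrix.mul_apply, ← Finset.sum_neg_distrib]
            exact Finset.sum_congr rfl fun k _ => by
              rw [Matrix.transpose_apply]; ring
        _ = ∑ k, M₂ i k * X₂ k j :=
            Finset.sum_congr rfl fun k _ => by rw [hent k]
    · have hLHS : M.submatrix id h i j = M₂ i k' := by
        rw [Matrix.submatrix_apply, id_eq, ← heψ j, hψj]; rfl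
      have hent : ∀ k, X₂ k j = if k = k' then (1:K) else 0 := by
        intro k
        rw [hX₂]
        show Sum.elim _ _ (ψ' j) = _
        rw [hψ'j j, hψj]
        rfl
      rw [hLHS, Matrix.mul_apply]
      calc M₂ i k' = ∑ k, M₂ i k * (if k = k' then (1:K) else 0) := by simp
        _ = ∑ k, M₂ i k * X₂ k j :=
            Finset.sum_congr rfl fun k _ => by rw [hent k]
  -- enumerations of the complementary index sets
  set Fp : Finset (Fin r ⊕ Fin p) := Finset.univ.image φ with hFp
  have hmemFp : ∀ x, x ∈ Fp ↔ x ∈ Set.range φ := by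
    intro x
    rw [hFp]
    simp
  set RS : Finset (Fin r) := Finset.univ.filter (fun l => Sum.inl l ∉ Fp) with hRS
  set CS : Finset (Fin p) := Finset.univ.filter (fun k => Sum.inr k ∈ Fp) with hCS
  have hcard_RS_CS : CS.card = RS.card := by
    have h1 : (Finset.univ.filter (fun l : Fin r => Sum.inl l ∈ Fp)).card + RS.card = r := by
      rw [hRS]
      simpa using Finset.card_filter_add_card_filter_not
        (s := (Finset.univ : Finset (Fin r))) (p := fun l : Fin r => Sum.inl l ∈ Fp)
    have hLimg : (Finset.univ.filter (fun l : Fin r => Sum.inl l ∈ Fp)).image Sum.inl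
        = Fp.filter (fun x => x.isLeft = true) := by
      ext x
      constructor
      · intro hx
        rcases Finset.mem_image.1 hx with ⟨l, hl, rfl⟩
        rw [Finset.mem_filter] at hl ⊢
        exact ⟨hl.2, rfl⟩
      · intro hx
        rw [Finset.mem_filter] at hx
        rcases Sum.isLeft_iff.1 hx.2 with ⟨l, rfl⟩
        exact Finset.mem_image.2 ⟨l, Finset.mem_filter.2 ⟨Finset.mem_univ l, hx.1⟩, rfl⟩
    have hRimg : CS.image Sum.inr = Fp.filter (fun x => x.isRight = true) := by
      ext x
      constructor
      · intro hx
        rcases Finset.mem_image.1 hx with ⟨k, hk, rfl⟩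
        rw [hCS, Finset.mem_filter] at hk
        rw [Finset.mem_filter]
        exact ⟨hk.2, rfl⟩
      · intro hx
        rw [Finset.mem_filter] at hx
        rcases Sum.isRight_iff.1 hx.2 with ⟨k, rfl⟩
        exact Finset.mem_image.2 ⟨k, Finset.mem_filter.2 ⟨Finset.mem_univ k, hx.1⟩, rfl⟩
    have hsplit : (Fp.filter (fun x => x.isLeft = true)).card + (Fp.filter (fun x => x.isRight = true)).card = Fp.card := by
      have heq2 : Fp.filter (fun x => x.isRight = true) = Fp.filter (fun x => ¬ (x.isLeft = true)) :=
        Finset.filter_congr (fun x _ => by cases x <;> simp)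
      rw [heq2]
      simpa using Finset.card_filter_add_card_filter_not
        (s := Fp) (p := fun x : Fin r ⊕ Fin p => x.isLeft = true)
    have hFpcard : Fp.card = r := by
      rw [hFp, Finset.card_image_of_injective _ hφ_inj]
      simp
    have hc1 : (Finset.univ.filter (fun l : Fin r => Sum.inl l ∈ Fp)).card
        = (Fp.filter (fun x => x.isLeft = true)).card := by
      rw [← hLimg, Finset.card_image_of_injective _ Sum.inl_injective]
    have hc2 : CS.card = (Fp.filter (fun x => x.isRight = true)).card := by
      rw [← hRimg, Finset.card_image_of_injective _ Sum.inr_injective]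
    omega
  set t : ℕ := RS.card with ht
  have hCScard : CS.card = t := hcard_RS_CS
  set rE : Fin t → Fin r := ⇑(RS.orderEmbOfFin rfl) with hrEd
  set cE : Fin t → Fin p := ⇑(CS.orderEmbOfFin hCScard) with hcEd
  have hrE_inj : Function.Injective rE := (RS.orderEmbOfFin rfl).injective
  have hcE_inj : Function.Injective cE := (CS.orderEmbOfFin hCScard).injective
  have hrange_rE : ∀ l, l ∈ Set.range rE ↔ Sum.inl l ∉ Set.range φ := by
    intro l
    rw [hrEd]
    rw [show Set.range ⇑(RS.orderEmbOfFin rfl) = ↑RS from Finset.range_orderEmbOfFin _ _]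
    rw [hRS]
    simp only [Finset.coe_filter, Set.mem_setOf_eq, Finset.mem_univ, true_and,
      Finset.mem_coe]
    rw [hmemFp]
  have hrange_cE : ∀ k, k ∈ Set.range cE ↔ Sum.inr k ∈ Set.range φ := by
    intro k
    rw [hcEd]
    rw [show Set.range ⇑(CS.orderEmbOfFin hCScard) = ↑CS from Finset.range_orderEmbOfFin _ _]
    rw [hCS]
    simp only [Finset.coe_filter, Set.mem_setOf_eq, Finset.mem_univ, true_and,
      Finset.mem_coe]
    rw [hmemFp]
  have hU1 : PM (X₁.det) ((C.submatrix rE cE).det) := by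
    rw [hX₁]
    exact det_unit_aug C φ hφ_inj rE cE hrE_inj hcE_inj hrange_rE hrange_cE
  have hrange2_r : ∀ k, k ∈ Set.range cE ↔ Sum.inl k ∉ Set.range ψ' := by
    intro k
    rw [hrange_cE k]
    constructor
    · intro hin hcon
      rcases hcon with ⟨j, hj⟩
      have h9 : ψ j = Sum.inr k := by
        have h8 := congrArg Sum.swap hj
        rw [hψ'j j, Sum.swap_swap] at h8
        exact h8
      exact ((hpart _).1 hin) ⟨j, h9⟩
    · intro hnot
      by_contra hno
      have h5 : Sum.inr k ∈ Set.range ψ := by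
        by_contra h6
        exact hno ((hpart _).2 h6)
      rcases h5 with ⟨j, hj⟩
      exact hnot ⟨j, by rw [hψ'j j, hj]; rfl⟩
  have hrange2_c : ∀ l, l ∈ Set.range rE ↔ Sum.inr l ∈ Set.range ψ' := by
    intro l
    rw [hrange_rE l]
    constructor
    · intro hnot
      have h5 : Sum.inl l ∈ Set.range ψ := by
        by_contra h6
        exact hnot ((hpart _).2 h6)
      rcases h5 with ⟨j, hj⟩
      exact ⟨j, by rw [hψ'j j, hj]; rfl⟩
    · rintro ⟨j, hj⟩ hcon
      have h9 : ψ j = Sum.inl l := by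
        have h8 := congrArg Sum.swap hj
        rw [hψ'j j, Sum.swap_swap] at h8
        exact h8
      exact ((hpart _).1 hcon) ⟨j, h9⟩
  have hU2 : PM (X₂.det) (((-Cᵀ).submatrix cE rE).det) := by
    rw [hX₂]
    exact det_unit_aug (-Cᵀ) ψ' hψ'_inj cE rE hcE_inj hrE_inj hrange2_r hrange2_c
  have hneg : ((-Cᵀ).submatrix cE rE).det = (-1:K)^t * ((C.submatrix rE cE).det) := by
    have h7 : (-Cᵀ).submatrix cE rE = -((C.submatrix rE cE)ᵀ) := by
      ext a b
      simp [Matrix.transpose_apply]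
    rw [h7, Matrix.det_neg, Matrix.det_transpose]
    simp
  have hPMfinal : PM (X₂.det) (X₁.det) := by
    refine PM.trans (PM.trans hU2 ?_) (PM.symm hU1)
    rw [hneg]
    exact PM.neg_one_pow t _
  rcases hPMfinal with hc | hc
  · refine ⟨1, Or.inl rfl, ?_⟩
    rw [key2, key1, Matrix.det_mul, Matrix.det_mul, hc]
    field_simp
  · refine ⟨-1, Or.inr (by ring), ?_⟩
    rw [key2, key1, Matrix.det_mul, Matrix.det_mul, hc]
    field_simp


lemma exists_complement {r p n : ℕ} (hrpn : r + p = n) (g : Fin r → Fin n)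
    (hg : Function.Injective g) :
    ∃ h : Fin p → Fin n, Function.Injective h ∧
      ∀ j : Fin n, (∃ i, g i = j) ∨ (∃ i, h i = j) := by
  classical
  have hc : ((Finset.univ.image g)ᶜ : Finset (Fin n)).card = p := by
    rw [Finset.card_compl, Finset.card_image_of_injective _ hg]
    simp [← hrpn]
  refine ⟨⇑((Finset.univ.image g)ᶜ.orderEmbOfFin hc),
    ((Finset.univ.image g)ᶜ.orderEmbOfFin hc).injective, ?_⟩
  intro j
  by_cases hj : j ∈ Finset.univ.image g
  · left
    rcases Finset.mem_image.1 hj with ⟨i, _, hi⟩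
    exact ⟨i, hi⟩
  · right
    have h1 : j ∈ ((Finset.univ.image g)ᶜ : Finset (Fin n)) := Finset.mem_compl.2 hj
    have h2 : j ∈ Set.range ⇑((Finset.univ.image g)ᶜ.orderEmbOfFin hc) := by
      rw [Finset.range_orderEmbOfFin]
      exact h1
    exact h2


end OrbAux

open OrbAux

/-- If P = L R is a factorization as in the definition of orb(K_a) (dual minimal bases with
the prescribed nullspace minimal indices and matching degrees summing to d), then the sum
of the row degrees of R equals a; that is, orb(K_a) ⊆ A^{m×n}_{d,r,a}. -/
theorem orbit_Ka_subset_Aa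
    {m n r d a : ℕ}
    (hm : 2 ≤ m) (hn : 2 ≤ n) (hd : 1 ≤ d) (hr0 : 0 < r) (hrm : r < m) (hrn : r < n)
    (ha : a ≤ r * d)
    (P : Matrix (Fin m) (Fin n) ℂ[X])
    (L : Matrix (Fin m) (Fin r) ℂ[X]) (R : Matrix (Fin r) (Fin n) ℂ[X])
    (hfact : P = L * R)
    (hL : IsMinimalColBasisC L) (hR : IsMinimalRowBasisC R)
    (hLind : HasMinIndices (leftNull L)
      (Multiset.replicate ((r * d - a) % (m - r)) ((r * d - a) / (m - r) + 1) +
       Multiset.replicate ((m - r) - (r * d - a) % (m - r)) ((r * d - a) / (m - r))))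
    (hRind : HasMinIndices (rightNull R)
      (Multiset.replicate (a % (n - r)) (a / (n - r) + 1) +
       Multiset.replicate ((n - r) - a % (n - r)) (a / (n - r))))
    (hdeg : ∀ i : Fin r, colDeg L i + rowDeg R i = (d : WithBot ℕ)) :
    (∑ i : Fin r, rowDeg R i) = (a : WithBot ℕ) := by
  classical
  obtain ⟨p, Mk, hMin, hspan, hms⟩ := hRind
  have hnr : 0 < n - r := by omega
  have hs_lt : a % (n - r) < n - r := Nat.mod_lt _ hnr
  have hdm := Nat.div_add_mod a (n - r)
  -- p = n - r
  have hpcard : p = n - r := by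
    have h1 := congrArg Multiset.card hms
    simp only [Multiset.card_map, Multiset.card_add, Multiset.card_replicate] at h1
    have h2 : Multiset.card (Finset.univ.val : Multiset (Fin p)) = p := by simp
    omega
  subst hpcard
  -- sum of row degrees of Mk is a
  have hsum_a : ∑ i : Fin (n - r), rowDegNat Mk i = a := by
    have h2 := congrArg Multiset.sum hms
    rw [Multiset.sum_add, Multiset.sum_replicate, Multiset.sum_replicate] at h2
    have h3 : (Finset.univ.val.map fun i : Fin (n - r) => rowDegNat Mk i).sum
        = ∑ i : Fin (n - r), rowDegNat Mk i := rfl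
    rw [h3] at h2
    rw [h2, smul_eq_mul, smul_eq_mul]
    have hle : a % (n - r) ≤ n - r := le_of_lt hs_lt
    nlinarith [hdm, Nat.sub_add_cancel hle]
  -- orthogonality
  have horth : toRat R * (toRat Mk)ᵀ = 0 := by
    ext i k
    have hk : (toRat Mk)ᵀ.mulVec (Pi.single k 1) ∈ rowSpace Mk :=
      ⟨Pi.single k 1, rfl⟩
    rw [hspan] at hk
    have hk0 : (toRat R).mulVec ((toRat Mk)ᵀ.mulVec (Pi.single k 1)) = 0 := hk
    have h3 : (toRat Mk)ᵀ.mulVec (Pi.single k 1) = fun j => toRat Mk k j := by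
      funext j
      simp [Matrix.mulVec, dotProduct, Pi.single_apply]
    rw [h3] at hk0
    have h4 : (toRat R).mulVec (fun j => toRat Mk k j) i = 0 := by rw [hk0]; rfl
    rw [Matrix.zero_apply, Matrix.mul_apply]
    rw [Matrix.mulVec, dotProduct] at h4
    simpa [Matrix.transpose_apply] using h4
  -- evaluation rank facts
  have hRrank : ∀ x : ℂ, ∃ g : Fin r → Fin n, Function.Injective g ∧
      ((R.submatrix id g).det).eval x ≠ 0 := by
    intro x
    obtain ⟨g, hginj, hgdet⟩ := exists_minor_ne_zero (R.map (fun q => q.eval x)) (hR.1 x)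
    refine ⟨g, hginj, ?_⟩
    rw [← eval_minor]
    exact hgdet
  have hMrank : ∀ x : ℂ, ∃ h : Fin (n - r) → Fin n, Function.Injective h ∧
      ((Mk.submatrix id h).det).eval x ≠ 0 := by
    intro x
    obtain ⟨g, hginj, hgdet⟩ := exists_minor_ne_zero (Mk.map (fun q => q.eval x)) (hMin.1 x)
    refine ⟨g, hginj, ?_⟩
    rw [← eval_minor]
    exact hgdet
  -- choose g₀
  obtain ⟨g₀, hg₀inj, hg₀⟩ := hRrank 0
  have hg₀poly : (R.submatrix id g₀).det ≠ 0 := fun h0 => hg₀ (by rw [h0]; simp)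
  have hA0 : ((toRat R).submatrix id g₀).det ≠ 0 := by
    rw [show toRat R = R.map (algebraMap ℂ[X] (RatFunc ℂ)) from rfl, algmap_minor]
    rw [map_ne_zero_iff _ (RatFunc.algebraMap_injective ℂ)]
    exact hg₀poly
  -- rows of toRat Mk linearly independent
  obtain ⟨h₁, hh₁inj, hh₁⟩ := hMrank 0
  have hh₁poly : (Mk.submatrix id h₁).det ≠ 0 := fun h0 => hh₁ (by rw [h0]; simp)
  have hMli : LinearIndependent (RatFunc ℂ) (fun i => toRat Mk i) := by
    apply rows_linearIndependent_of_minor (toRat Mk) h₁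
    rw [show toRat Mk = Mk.map (algebraMap ℂ[X] (RatFunc ℂ)) from rfl, algmap_minor]
    rw [map_ne_zero_iff _ (RatFunc.algebraMap_injective ℂ)]
    exact hh₁poly
  -- duality
  obtain ⟨f, hf0, hdual⟩ := duality (by omega : r + (n - r) = n) (toRat R) (toRat Mk)
    horth hMli g₀ hg₀inj hA0
  set pn : ℂ[X] := f.num with hpn
  set pd : ℂ[X] := f.denom with hpd
  have hpn0 : pn ≠ 0 := RatFunc.num_ne_zero hf0
  have hpd0 : pd ≠ 0 := f.denom_ne_zero
  have hcop : IsCoprime pn pd := f.isCoprime_num_denom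
  have hfd : f * algebraMap ℂ[X] (RatFunc ℂ) pd = algebraMap ℂ[X] (RatFunc ℂ) pn := by
    have := RatFunc.num_div_denom f
    rw [← hpn, ← hpd] at this
    rw [← this]
    have hdnz : algebraMap ℂ[X] (RatFunc ℂ) pd ≠ 0 := by
      rw [map_ne_zero_iff _ (RatFunc.algebraMap_injective ℂ)]
      exact hpd0
    field_simp
  -- polynomial relation
  have hrel : ∀ (g : Fin r → Fin n) (h : Fin (n - r) → Fin n),
      (∀ j : Fin n, (∃ i, g i = j) ∨ (∃ i, h i = j)) →
      ∃ c : ℂ[X], (c = 1 ∨ c = -1) ∧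
        pd * (Mk.submatrix id h).det = c * (pn * (R.submatrix id g).det) := by
    intro g h hcov
    obtain ⟨c, hcpm, hceq⟩ := hdual g h hcov
    rw [show toRat Mk = Mk.map (algebraMap ℂ[X] (RatFunc ℂ)) from rfl, algmap_minor] at hceq
    rw [show toRat R = R.map (algebraMap ℂ[X] (RatFunc ℂ)) from rfl, algmap_minor] at hceq
    have key : algebraMap ℂ[X] (RatFunc ℂ) (pd * (Mk.submatrix id h).det)
        = c * algebraMap ℂ[X] (RatFunc ℂ) (pn * (R.submatrix id g).det) := by
      rw [_root_.map_mul, _root_.map_mul, hceq, ← hfd]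
      ring
    rcases hcpm with hc1 | hc1
    · refine ⟨1, Or.inl rfl, ?_⟩
      apply RatFunc.algebraMap_injective ℂ
      rw [key, hc1, one_mul, one_mul]
    · refine ⟨-1, Or.inr rfl, ?_⟩
      apply RatFunc.algebraMap_injective ℂ
      rw [key, hc1, neg_one_mul, neg_one_mul, map_neg]
  -- pn has degree ≤ 0
  have hpnc : pn.degree ≤ 0 := by
    by_contra hcon
    push_neg at hcon
    obtain ⟨x₀, hx₀⟩ := Complex.exists_root hcon
    rw [Polynomial.IsRoot] at hx₀
    have hpdx : pd.eval x₀ ≠ 0 := by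
      obtain ⟨u, v, huv⟩ := hcop
      intro h0
      have := congrArg (Polynomial.eval x₀) huv
      simp [hx₀, h0] at this
    obtain ⟨h, hhinj, hhev⟩ := hMrank x₀
    obtain ⟨g, hginj, hgcov⟩ := exists_complement (by omega : (n - r) + r = n) h hhinj
    obtain ⟨c, hc1, hceq⟩ := hrel g h (fun j => (hgcov j).symm)
    have h9 := congrArg (Polynomial.eval x₀) hceq
    rw [Polynomial.eval_mul, Polynomial.eval_mul, Polynomial.eval_mul, hx₀,
      zero_mul, mul_zero] at h9
    rcases mul_eq_zero.1 h9 with h6 | h6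
    · exact hpdx h6
    · exact hhev h6
  -- pd has degree ≤ 0
  have hpdc : pd.degree ≤ 0 := by
    by_contra hcon
    push_neg at hcon
    obtain ⟨x₀, hx₀⟩ := Complex.exists_root hcon
    rw [Polynomial.IsRoot] at hx₀
    have hpnx : pn.eval x₀ ≠ 0 := by
      obtain ⟨u, v, huv⟩ := hcop
      intro h0
      have := congrArg (Polynomial.eval x₀) huv
      simp [hx₀, h0] at this
    obtain ⟨g, hginj, hgev⟩ := hRrank x₀
    obtain ⟨h, hhinj, hhcov⟩ := exists_complement (by omega : r + (n - r) = n) g hginj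
    obtain ⟨c, hc1, hceq⟩ := hrel g h hhcov
    have h9 := congrArg (Polynomial.eval x₀) hceq
    rw [Polynomial.eval_mul, hx₀, zero_mul, Polynomial.eval_mul,
      Polynomial.eval_mul] at h9
    have hcne : c.eval x₀ ≠ 0 := by
      rcases hc1 with h7 | h7 <;> rw [h7] <;> simp
    have hz := (mul_eq_zero.1 h9.symm).resolve_left hcne
    rcases mul_eq_zero.1 hz with h6 | h6
    · exact hpnx h6
    · exact hgev h6
  have hdpd : pd.degree = 0 := le_antisymm hpdc (Polynomial.zero_le_degree_iff.2 hpd0)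
  have hdpn : pn.degree = 0 := le_antisymm hpnc (Polynomial.zero_le_degree_iff.2 hpn0)
  -- degree equality for complementary pairs
  have hdeg_eq : ∀ (g : Fin r → Fin n) (h : Fin (n - r) → Fin n),
      (∀ j : Fin n, (∃ i, g i = j) ∨ (∃ i, h i = j)) →
      ((Mk.submatrix id h).det).degree = ((R.submatrix id g).det).degree := by
    intro g h hcov
    obtain ⟨c, hc1, hceq⟩ := hrel g h hcov
    have h8 := congrArg Polynomial.degree hceq
    rw [Polynomial.degree_mul, Polynomial.degree_mul, Polynomial.degree_mul,
      hdpd, hdpn] at h8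
    have hcdeg : c.degree = 0 := by
      rcases hc1 with h7 | h7 <;> rw [h7] <;> simp
    rw [hcdeg] at h8
    simpa using h8
  -- degrees achieved
  set DR := ∑ i, rowDegNat R i with hDR
  have hachM : ∃ h : Fin (n - r) → Fin n, Function.Injective h ∧
      ((Mk.submatrix id h).det).degree = ((a : ℕ) : WithBot ℕ) := by
    obtain ⟨h, hhinj, hhdet⟩ := exists_minor_ne_zero (hrMatrix Mk) hMin.2
    refine ⟨h, hhinj, ?_⟩
    have hc : ((Mk.submatrix id h).det).coeff (∑ i, rowDegNat Mk i) ≠ 0 := by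
      rw [coeff_minor]
      exact hhdet
    have hge := Polynomial.le_degree_of_ne_zero hc
    have hle := degree_minor_le Mk h
    rw [hsum_a] at hge hle
    exact le_antisymm hle hge
  have hachR : ∃ g : Fin r → Fin n, Function.Injective g ∧
      ((R.submatrix id g).det).degree = ((DR : ℕ) : WithBot ℕ) := by
    obtain ⟨g, hginj, hgdet⟩ := exists_minor_ne_zero (hrMatrix R) hR.2
    refine ⟨g, hginj, ?_⟩
    have hc : ((R.submatrix id g).det).coeff (∑ i, rowDegNat R i) ≠ 0 := by
      rw [coeff_minor]
      exact hgdet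
    have hge := Polynomial.le_degree_of_ne_zero hc
    have hle := degree_minor_le R g
    exact le_antisymm hle hge
  -- DR = a
  have hDRa : DR = a := by
    have hle1 : a ≤ DR := by
      obtain ⟨h, hhinj, hhdeg⟩ := hachM
      obtain ⟨g, hginj, hgcov⟩ := exists_complement (by omega : (n - r) + r = n) h hhinj
      have := hdeg_eq g h (fun j => (hgcov j).symm)
      rw [hhdeg] at this
      have hle := degree_minor_le R g
      rw [← this] at hle
      exact_mod_cast (Nat.cast_le (α := WithBot ℕ)).1 hle
    have hle2 : DR ≤ a := by
      obtain ⟨g, hginj, hgdeg⟩ := hachR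
      obtain ⟨h, hhinj, hhcov⟩ := exists_complement (by omega : r + (n - r) = n) g hginj
      have := hdeg_eq g h hhcov
      rw [hgdeg] at this
      have hle := degree_minor_le Mk h
      rw [this] at hle
      rw [hsum_a] at hle
      exact_mod_cast (Nat.cast_le (α := WithBot ℕ)).1 hle
    omega
  -- rows of R are nonzero
  have hrow : ∀ i : Fin r, ∃ j, R i j ≠ 0 := by
    intro i
    by_contra hcon
    push_neg at hcon
    obtain ⟨g, hginj, hgdet⟩ := exists_minor_ne_zero (R.map (fun q => q.eval 0)) (hR.1 0)
    apply hgdet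
    apply Matrix.det_eq_zero_of_row_eq_zero i
    intro j
    simp [hcon (g j)]
  -- conclude
  have hfinal : ∀ i : Fin r, rowDeg R i = ((rowDegNat R i : ℕ) : WithBot ℕ) :=
    fun i => rowDeg_eq_rowDegNat R i (hrow i)
  calc ∑ i : Fin r, rowDeg R i = ∑ i : Fin r, ((rowDegNat R i : ℕ) : WithBot ℕ) :=
        Finset.sum_congr rfl fun i _ => hfinal i
    _ = ((∑ i : Fin r, rowDegNat R i : ℕ) : WithBot ℕ) := (Nat.cast_sum _ _).symm
    _ = ((a : ℕ) : WithBot ℕ) := by rw [← hDR, hDRa]
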